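/- Let Λ be a countable finitely aligned category of paths, v a vertex, and C ∈ vΛ*. Then C lies in the closure of vΛ** in X_v if and only if for every α ∈ C there exists α' ∈ C ∩ αΛ such that σ^{α'}(C) ∩ F ≠ ∅ for every finite exhaustive subset F ⊆ s(α')Λ, where σ^{α'}(C) = {γ ∈ s(α')Λ : α'γ ∈ C}. -/

import Mathlib

universe u v

/-- A category of paths: a small category (objects identified with identity
morphisms) with left and right cancellation and no inverses. -/
structure CategoryOfPaths (Λ : Type u) where
  s : Λ → Λ
  r : Λ → Λ
  comp : Λ → Λ → Λ
  s_comp : ∀ {α β : Λ}, s α = r β → s (comp α β) = s β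
  r_comp : ∀ {α β : Λ}, s α = r β → r (comp α β) = r α
  comp_assoc : ∀ {α β γ : Λ}, s α = r β → s β = r γ →
    comp (comp α β) γ = comp α (comp β γ)
  id_comp : ∀ α : Λ, comp (r α) α = α
  comp_id : ∀ α : Λ, comp α (s α) = α
  s_r : ∀ α : Λ, s (r α) = r α
  r_r : ∀ α : Λ, r (r α) = r α
  r_s : ∀ α : Λ, r (s α) = s α
  s_s : ∀ α : Λ, s (s α) = s α
  left_cancel : ∀ {α β γ : Λ}, s α = r β → s α = r γ → comp α β = comp α γ → β = γ
  right_cancel : ∀ {β γ α : Λ}, s β = r α → s γ = r α → comp β α = comp γ α → β = γ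
  no_inverses : ∀ {α β : Λ}, s α = r β → comp α β = s β → α = s β ∧ β = s β

variable {Λ : Type u}

/-- The tail set `αΛ`. -/
def pTail (C : CategoryOfPaths Λ) (α : Λ) : Set Λ :=
  {x | ∃ β, C.s α = C.r β ∧ x = C.comp α β}

/-- `vΛ`, the paths with range `v`. -/
def pRng (C : CategoryOfPaths Λ) (w : Λ) : Set Λ := {α | C.r α = w}

/-- `Λv`, the paths with source `v`. -/
def pSrc (C : CategoryOfPaths Λ) (w : Λ) : Set Λ := {α | C.s α = w}

/-- `[β]`, the initial segments of `β`. -/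
def pSeg (C : CategoryOfPaths Λ) (β : Λ) : Set Λ := {α | β ∈ pTail C α}

/-- `α ⋔ β`. -/
def pMeets (C : CategoryOfPaths Λ) (α β : Λ) : Prop :=
  (pTail C α ∩ pTail C β).Nonempty

/-- `αE`. -/
def pMulSet (C : CategoryOfPaths Λ) (α : Λ) (E : Set Λ) : Set Λ :=
  {x | ∃ β ∈ E, C.s α = C.r β ∧ x = C.comp α β}

/-- `σ^α(E ∩ αΛ)`, computed inside an ambient subcategory `S`. -/
def pShiftIn (C : CategoryOfPaths Λ) (S : Set Λ) (α : Λ) (E : Set Λ) : Set Λ :=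
  {β | β ∈ S ∧ C.s α = C.r β ∧ C.comp α β ∈ E}

/-- `σ^α(E ∩ αΛ)`. -/
def pShift (C : CategoryOfPaths Λ) (α : Λ) (E : Set Λ) : Set Λ :=
  {β | C.s α = C.r β ∧ C.comp α β ∈ E}

/-- `⋁F`: the minimal common extensions of `F`. -/
def pMinExt (C : CategoryOfPaths Λ) (F : Set Λ) : Set Λ :=
  {ε | (∀ α ∈ F, ε ∈ pTail C α) ∧
    ∀ γ, (∀ α ∈ F, γ ∈ pTail C α) → ε ∈ pTail C γ → γ = ε}

/-- `α ∨ β`: the minimal common extensions of `α` and `β`. -/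
def pMinCE (C : CategoryOfPaths Λ) (α β : Λ) : Set Λ := pMinExt C {α, β}

/-- A subcategory of a category of paths, as a set of morphisms. -/
structure IsSubcategory (C : CategoryOfPaths Λ) (Λ₀ : Set Λ) : Prop where
  comp_mem : ∀ {α β : Λ}, α ∈ Λ₀ → β ∈ Λ₀ → C.s α = C.r β → C.comp α β ∈ Λ₀
  s_mem : ∀ {α : Λ}, α ∈ Λ₀ → C.s α ∈ Λ₀
  r_mem : ∀ {α : Λ}, α ∈ Λ₀ → C.r α ∈ Λ₀

/-- A finitely aligned category of paths. -/
def FinitelyAligned (C : CategoryOfPaths Λ) : Prop :=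
  ∀ α β : Λ, ∃ G : Set Λ, G.Finite ∧
    pTail C α ∩ pTail C β = ⋃ ε ∈ G, pTail C ε

/-- A finitely aligned relative category of paths `(Λ₀, Λ)`. -/
def RelFinitelyAligned (C : CategoryOfPaths Λ) (Λ₀ : Set Λ) : Prop :=
  (∀ α ∈ Λ₀, ∀ β ∈ Λ₀, ∃ G : Set Λ, G.Finite ∧ G ⊆ Λ₀ ∧
      pTail C α ∩ pTail C β = ⋃ ε ∈ G, pTail C ε) ∧
  (∀ α ∈ Λ₀, pTail C α ∩ Λ₀ = pMulSet C α Λ₀)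

/-- A ring of sets: contains `∅` and is closed under `∪`, `∩`, and `\`. -/
def IsSetRing {γ : Type v} (R : Set (Set γ)) : Prop :=
  ∅ ∈ R ∧ (∀ E ∈ R, ∀ F ∈ R, E ∪ F ∈ R) ∧ (∀ E ∈ R, ∀ F ∈ R, E ∩ F ∈ R) ∧
    (∀ E ∈ R, ∀ F ∈ R, E \ F ∈ R)

/-- A ring of sets on `S`: a ring of sets all of whose members are subsets of `S`. -/
def IsSetRingOn {γ : Type v} (S : Set γ) (R : Set (Set γ)) : Prop :=
  IsSetRing R ∧ ∀ E ∈ R, E ⊆ S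

/-- The ring of sets generated by a collection. -/
def setRingGen {γ : Type v} (G : Set (Set γ)) : Set (Set γ) :=
  ⋂₀ {R | IsSetRing R ∧ G ⊆ R}

/-- The ring of sets on `S` generated by a collection. -/
def setRingGenOn {γ : Type v} (S : Set γ) (G : Set (Set γ)) : Set (Set γ) :=
  ⋂₀ {R | IsSetRingOn S R ∧ G ⊆ R}

/-- A zigzag: a list of pairs `(αᵢ, βᵢ)` with `r αᵢ = r βᵢ` and `s αᵢ₊₁ = s βᵢ`. -/
def IsZigzag (C : CategoryOfPaths Λ) (l : List (Λ × Λ)) : Prop :=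
  (∀ p ∈ l, C.r p.1 = C.r p.2) ∧ l.Chain' (fun p q => C.s q.1 = C.s p.2)

/-- The (graph of the) zigzag map `φ_ζ = σ^{α₁} β₁ ⋯ σ^{αₙ} βₙ`, computed
inside an ambient subcategory `S`. -/
def zigzagRelIn (C : CategoryOfPaths Λ) (S : Set Λ) : List (Λ × Λ) → Λ → Λ → Prop
  | [], x, y => x = y ∧ x ∈ S
  | p :: rest, x, y => ∃ z, zigzagRelIn C S rest x z ∧ C.s p.2 = C.r z ∧
      C.s p.1 = C.r y ∧ y ∈ S ∧ C.comp p.2 z = C.comp p.1 y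

/-- `A(ζ)`: the domain of the zigzag map. -/
def zigzagDomIn (C : CategoryOfPaths Λ) (S : Set Λ) (l : List (Λ × Λ)) : Set Λ :=
  {x | ∃ y, zigzagRelIn C S l x y}

/-- `𝒟(Λ₀,Λ)⁰_v`: nonempty zigzag sets with entries in `Λ₀` and source `v`,
computed inside the ambient subcategory `S`. -/
def relD0 (C : CategoryOfPaths Λ) (Λ₀ S : Set Λ) (w : Λ) : Set (Set Λ) :=
  {E | E.Nonempty ∧ ∃ (l : List (Λ × Λ)) (h : l ≠ []),
    IsZigzag C l ∧ (∀ p ∈ l, p.1 ∈ Λ₀ ∧ p.2 ∈ Λ₀) ∧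
    C.s (l.getLast h).2 = w ∧ E = zigzagDomIn C S l}

/-- `𝒜(Λ₀,Λ)_v`: the ring of sets generated by the zigzag sets. -/
def relAring (C : CategoryOfPaths Λ) (Λ₀ S : Set Λ) (w : Λ) : Set (Set Λ) :=
  setRingGenOn {α | α ∈ S ∧ C.r α = w} (relD0 C Λ₀ S w)

/-- A filter in a ring of sets. -/
def IsFilterIn {γ : Type v} (R U : Set (Set γ)) : Prop :=
  U.Nonempty ∧ U ⊆ R ∧ (∀ E ∈ U, E.Nonempty) ∧
    (∀ E ∈ U, ∀ F ∈ U, E ∩ F ∈ U) ∧ (∀ E ∈ U, ∀ F ∈ R, E ⊆ F → F ∈ U)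

/-- An ultrafilter in a ring of sets: a maximal filter. -/
def IsUltrafilterIn {γ : Type v} (R U : Set (Set γ)) : Prop :=
  IsFilterIn R U ∧ ∀ V, IsFilterIn R V → U ⊆ V → V = U

/-- A filter base in a ring of sets. -/
def IsFilterBaseIn {γ : Type v} (R B : Set (Set γ)) : Prop :=
  B.Nonempty ∧ B ⊆ R ∧ (∀ E ∈ B, E.Nonempty) ∧
    ∀ E ∈ B, ∀ F ∈ B, ∃ G ∈ B, G ⊆ E ∩ F

/-- The filter generated by a filter base. -/
def filterGenBy {γ : Type v} (R B : Set (Set γ)) : Set (Set γ) :=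
  {E | E ∈ R ∧ ∃ F ∈ B, F ⊆ E}

/-- An ultrafilter base in a ring of sets. -/
def IsUltrafilterBaseIn {γ : Type v} (R B : Set (Set γ)) : Prop :=
  IsFilterBaseIn R B ∧ IsUltrafilterIn R (filterGenBy R B)

/-- A Boolean ring homomorphism defined on a ring of sets `A` with values in a
generalized Boolean algebra. -/
def IsBRHomOn {γ : Type v} {R : Type*} [GeneralizedBooleanAlgebra R]
    (A : Set (Set γ)) (ν : Set γ → R) : Prop :=
  ν ∅ = ⊥ ∧ (∀ E ∈ A, ∀ F ∈ A, ν (E ∪ F) = ν E ⊔ ν F) ∧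
    (∀ E ∈ A, ∀ F ∈ A, ν (E ∩ F) = ν E ⊓ ν F) ∧
    (∀ E ∈ A, ∀ F ∈ A, ν (E \ F) = ν E \ ν F)

/-- `𝒜_v`: the ring of sets on `vΛ` generated by the tail sets. -/
def tailRing (C : CategoryOfPaths Λ) (w : Λ) : Set (Set Λ) :=
  setRingGenOn (pRng C w) {E | ∃ α, C.r α = w ∧ E = pTail C α}

/-- A directed subset. -/
def pDirected (C : CategoryOfPaths Λ) (x : Set Λ) : Prop :=
  ∀ α ∈ x, ∀ β ∈ x, (pTail C α ∩ pTail C β ∩ x).Nonempty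

/-- A hereditary subset. -/
def pHereditary (C : CategoryOfPaths Λ) (x : Set Λ) : Prop :=
  ∀ γ ∈ x, ∀ α : Λ, γ ∈ pTail C α → α ∈ x

/-- `vΛ*`: the nonempty directed hereditary subsets of `vΛ`. -/
def lamStar (C : CategoryOfPaths Λ) (w : Λ) : Set (Set Λ) :=
  {x | x.Nonempty ∧ x ⊆ pRng C w ∧ pDirected C x ∧ pHereditary C x}

/-- `vΛ**`: the maximal directed subsets of `vΛ`. -/
def lamStarStar (C : CategoryOfPaths Λ) (w : Λ) : Set (Set Λ) :=
  {x | x ⊆ pRng C w ∧ pDirected C x ∧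
    ∀ y, y ⊆ pRng C w → pDirected C y → x ⊆ y → y = x}

/-- `αx = ⋃_{γ ∈ x} [αγ]` for `x ∈ s(α)Λ*`. -/
def pMulStar (C : CategoryOfPaths Λ) (α : Λ) (x : Set Λ) : Set Λ :=
  {δ | ∃ γ ∈ x, C.s α = C.r γ ∧ C.comp α γ ∈ pTail C δ}

/-- `𝒰_{C,0}`. -/
def UC0 (C : CategoryOfPaths Λ) (w : Λ) (x : Set Λ) : Set (Set Λ) :=
  {E | E ∈ tailRing C w ∧ ∃ α ∈ x, pTail C α ⊆ E}

/-- `𝒰_C`. -/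
def UC (C : CategoryOfPaths Λ) (w : Λ) (x : Set Λ) : Set (Set Λ) :=
  {E | E ∈ tailRing C w ∧ ∃ α ∈ x, x ∩ pTail C α ⊆ E}

/-- `X_v = vΛ*` as a type. -/
abbrev Xv (C : CategoryOfPaths Λ) (w : Λ) : Type u := {x : Set Λ // x ∈ lamStar C w}

/-- The topology on `X_v` generated by the sets `Ê`, `E ∈ 𝒜_v`. -/
def XvTop (C : CategoryOfPaths Λ) (w : Λ) : TopologicalSpace (Xv C w) :=
  TopologicalSpace.generateFrom
    {t | ∃ E ∈ tailRing C w, t = {x : Xv C w | E ∈ UC C w x.1}}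

/-- The vertices of `Λ`. -/
abbrev Vertex (C : CategoryOfPaths Λ) : Type u := {w : Λ // C.r w = w}

/-- `X`: the disjoint union of the spaces `X_v`. -/
abbrev Xtotal (C : CategoryOfPaths Λ) : Type u := Σ w : Vertex C, Xv C w.1

/-- The disjoint union topology on `X`. -/
def XtotalTop (C : CategoryOfPaths Λ) : TopologicalSpace (Xtotal C) :=
  letI : ∀ w : Vertex C, TopologicalSpace (Xv C w.1) := fun w => XvTop C w.1
  inferInstance

/-- The boundary `∂Λ`: the closure of `Λ**` in `X`. -/
def boundarySet (C : CategoryOfPaths Λ) : Set (Xtotal C) :=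
  @closure _ (XtotalTop C) {p : Xtotal C | p.2.1 ∈ lamStarStar C p.1.1}

/-- An exhaustive subset of `vΛ`. -/
def ExhaustiveAt (C : CategoryOfPaths Λ) (w : Λ) (F : Set Λ) : Prop :=
  ∀ α, C.r α = w → ∃ β ∈ F, pMeets C α β

/-- An aperiodic point of `Λ*`. -/
def pAperiodic (C : CategoryOfPaths Λ) (x : Set Λ) : Prop :=
  ∀ α ∈ x, ∀ β ∈ x, α ≠ β → pShift C α x ≠ pShift C β x

/-- A right-aperiodic point of `wΛ*`. -/
def pRightAperiodicAt (C : CategoryOfPaths Λ) (w : Λ) (x : Set Λ) : Prop :=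
  ∀ α β : Λ, C.s α = w → C.s β = w → α ≠ β → pMulStar C α x ≠ pMulStar C β x

/-- The triples `(α, β, x)` with `s α = s β` and `x ∈ s(α)Λ*`. -/
abbrev pTrip (C : CategoryOfPaths Λ) : Type u :=
  {t : Λ × Λ × Set Λ // C.s t.1 = C.s t.2.1 ∧ t.2.2 ∈ lamStar C (C.s t.1)}

/-- The groupoid equivalence relation on triples. -/
def tripRel (C : CategoryOfPaths Λ) (t t' : pTrip C) : Prop :=
  ∃ (z : Set Λ) (δ δ' : Λ),
    z ∈ lamStar C (C.s δ) ∧ z ∈ lamStar C (C.s δ') ∧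
    C.s t.1.1 = C.r δ ∧ C.s t'.1.1 = C.r δ' ∧
    t.1.2.2 = pMulStar C δ z ∧ t'.1.2.2 = pMulStar C δ' z ∧
    C.comp t.1.1 δ = C.comp t'.1.1 δ' ∧
    C.comp t.1.2.1 δ = C.comp t'.1.2.1 δ'

/-- The ultrafilter space of `𝒜(Λ₀,Λ)_v`. -/
abbrev relXv (C : CategoryOfPaths Λ) (Λ₀ : Set Λ) (w : Λ) : Type u :=
  {U : Set (Set Λ) // IsUltrafilterIn (relAring C Λ₀ Set.univ w) U}

/-- The topology on the ultrafilter space of `𝒜(Λ₀,Λ)_v` generated by the `Ê`. -/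
def relXvTop (C : CategoryOfPaths Λ) (Λ₀ : Set Λ) (w : Λ) :
    TopologicalSpace (relXv C Λ₀ w) :=
  TopologicalSpace.generateFrom
    {t | ∃ E ∈ relAring C Λ₀ Set.univ w, t = {U : relXv C Λ₀ w | E ∈ U.1}}

/-! ### Auxiliary lemmas for statement13 -/

section Aux

variable {Λ : Type u} (C : CategoryOfPaths Λ)

lemma mem_pTail_self (α : Λ) : α ∈ pTail C α :=
  ⟨C.s α, (C.r_s α).symm, (C.comp_id α).symm⟩

variable {C}

lemma r_of_mem_pTail {a x : Λ} (h : x ∈ pTail C a) : C.r x = C.r a := by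
  obtain ⟨b, hb, rfl⟩ := h; exact C.r_comp hb

lemma pTail_trans {a b x : Λ} (hx : x ∈ pTail C b) (hb : b ∈ pTail C a) :
    x ∈ pTail C a := by
  obtain ⟨t, ht, rfl⟩ := hx
  obtain ⟨u, hu, rfl⟩ := hb
  have ht' : C.s u = C.r t := by rwa [C.s_comp hu] at ht
  refine ⟨C.comp u t, ?_, C.comp_assoc hu ht'⟩
  rw [C.r_comp ht']; exact hu

lemma pTail_mono {a b : Λ} (hb : b ∈ pTail C a) : pTail C b ⊆ pTail C a :=
  fun _ hx => pTail_trans hx hb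

lemma comp_mem_pTail {a b : Λ} (h : C.s a = C.r b) : C.comp a b ∈ pTail C a :=
  ⟨b, h, rfl⟩

/-- maximal directed sets are hereditary -/
lemma hereditary_of_max {w : Λ} {z : Set Λ} (hz : z ∈ lamStarStar C w) :
    pHereditary C z := by
  intro γ hγ a ha
  obtain ⟨hsub, hdir, hmax⟩ := hz
  have hins : pDirected C (insert a z) := by
    intro p hp q hq
    rcases hp with rfl | hp
    · rcases hq with rfl | hq
      · exact ⟨γ, ⟨ha, ha⟩, Or.inr hγ⟩
      · obtain ⟨m, ⟨hm1, hm2⟩, hm3⟩ := hdir γ hγ q hq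
        exact ⟨m, ⟨pTail_trans hm1 ha, hm2⟩, Or.inr hm3⟩
    · rcases hq with rfl | hq
      · obtain ⟨m, ⟨hm1, hm2⟩, hm3⟩ := hdir p hp γ hγ
        exact ⟨m, ⟨hm1, pTail_trans hm2 ha⟩, Or.inr hm3⟩
      · obtain ⟨m, hm, hm3⟩ := hdir p hp q hq
        exact ⟨m, hm, Or.inr hm3⟩
  have hsub' : insert a z ⊆ pRng C w := by
    intro p hp
    rcases hp with rfl | hp
    · have : C.r γ = w := hsub hγ
      rwa [pRng, Set.mem_setOf_eq, ← r_of_mem_pTail ha]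
    · exact hsub hp
  have := hmax _ hsub' hins (Set.subset_insert a z)
  rw [← this]; exact Set.mem_insert a z

lemma vertex_mem_of_max {w : Λ} {z : Set Λ} (hw : C.r w = w)
    (hz : z ∈ lamStarStar C w) : w ∈ z := by
  obtain ⟨hsub, hdir, hmax⟩ := hz
  have hsw : C.s w = w := by rw [← hw]; exact C.s_r w
  have hwm : ∀ p, C.r p = w → p ∈ pTail C w := by
    intro p hp
    refine ⟨p, hsw.trans hp.symm, ?_⟩
    have h2 := C.id_comp p
    rw [hp] at h2
    exact h2.symm
  have hins : pDirected C (insert w z) := by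
    intro p hp q hq
    rcases hp with hpw | hp
    · rcases hq with hqw | hq
      · refine ⟨w, ⟨?_, ?_⟩, Or.inl rfl⟩
        · rw [hpw]; exact hwm w hw
        · rw [hqw]; exact hwm w hw
      · refine ⟨q, ⟨?_, mem_pTail_self C q⟩, Or.inr hq⟩
        rw [hpw]; exact hwm q (hsub hq)
    · rcases hq with hqw | hq
      · refine ⟨p, ⟨mem_pTail_self C p, ?_⟩, Or.inr hp⟩
        rw [hqw]; exact hwm p (hsub hp)
      · obtain ⟨m, hm, hm3⟩ := hdir p hp q hq
        exact ⟨m, hm, Or.inr hm3⟩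
  have hsub' : insert w z ⊆ pRng C w := by
    intro p hp
    rcases hp with hpw | hp
    · show C.r p = w
      rw [hpw]; exact hw
    · exact hsub hp
  have := hmax _ hsub' hins (Set.subset_insert w z)
  rw [← this]; exact Set.mem_insert w z

lemma pSeg_directed (e : Λ) : pDirected C (pSeg C e) := by
  intro a ha b hb
  exact ⟨e, ⟨ha, hb⟩, mem_pTail_self C e⟩

/-- Zorn: every `[e]` extends to a maximal directed subset of `wΛ`. -/
lemma exists_max_above {w e : Λ} (he : C.r e = w) :
    ∃ z, z ∈ lamStarStar C w ∧ e ∈ z := by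
  classical
  set S : Set (Set Λ) := {t | t ⊆ pRng C w ∧ pDirected C t ∧ e ∈ t} with hS
  have hbase : pSeg C e ∈ S := by
    refine ⟨?_, pSeg_directed e, mem_pTail_self C e⟩
    intro a ha
    have : C.r e = C.r a := r_of_mem_pTail ha
    rw [pRng, Set.mem_setOf_eq, ← this, he]
  have hchain : ∀ c ⊆ S, IsChain (· ⊆ ·) c → c.Nonempty →
      ∃ ub ∈ S, ∀ s ∈ c, s ⊆ ub := by
    intro c hc hch ⟨t0, ht0⟩
    refine ⟨⋃₀ c, ⟨?_, ?_, Set.mem_sUnion.2 ⟨t0, ht0, (hc ht0).2.2⟩⟩,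
      fun s hs => Set.subset_sUnion_of_mem hs⟩
    · intro a ⟨t, ht, hat⟩; exact (hc ht).1 hat
    · intro a ⟨ta, hta, hata⟩ b ⟨tb, htb, hbtb⟩
      rcases hch.total hta htb with h | h
      · obtain ⟨m, hm, hm3⟩ := (hc htb).2.1 a (h hata) b hbtb
        exact ⟨m, hm, Set.mem_sUnion.2 ⟨tb, htb, hm3⟩⟩
      · obtain ⟨m, hm, hm3⟩ := (hc hta).2.1 a hata b (h hbtb)
        exact ⟨m, hm, Set.mem_sUnion.2 ⟨ta, hta, hm3⟩⟩
  obtain ⟨m, _, hmax⟩ := zorn_subset_nonempty S hchain _ hbase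
  refine ⟨m, ⟨hmax.prop.1, hmax.prop.2.1, ?_⟩, hmax.prop.2.2⟩
  intro y hy1 hy2 hy3
  exact hmax.eq_of_ge ⟨hy1, hy2, hy3 hmax.prop.2.2⟩ hy3

end Aux

section Aux2

variable {Λ : Type u} {C : CategoryOfPaths Λ}

lemma pTail_subset_pRng {a w : Λ} (ha : C.r a = w) : pTail C a ⊆ pRng C w :=
  fun _ hx => (r_of_mem_pTail hx).trans ha

lemma gen_mem_tailRing {w a : Λ} (ha : C.r a = w) : pTail C a ∈ tailRing C w :=
  fun _ hR => hR.2 ⟨a, ha, rfl⟩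

lemma tailRing_empty (w : Λ) : (∅ : Set Λ) ∈ tailRing C w :=
  fun _ hR => hR.1.1.1

lemma tailRing_union {w : Λ} {E F : Set Λ} (hE : E ∈ tailRing C w)
    (hF : F ∈ tailRing C w) : E ∪ F ∈ tailRing C w :=
  fun R hR => hR.1.1.2.1 E (hE R hR) F (hF R hR)

lemma tailRing_inter {w : Λ} {E F : Set Λ} (hE : E ∈ tailRing C w)
    (hF : F ∈ tailRing C w) : E ∩ F ∈ tailRing C w :=
  fun R hR => hR.1.1.2.2.1 E (hE R hR) F (hF R hR)

lemma tailRing_diff {w : Λ} {E F : Set Λ} (hE : E ∈ tailRing C w)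
    (hF : F ∈ tailRing C w) : E \ F ∈ tailRing C w :=
  fun R hR => hR.1.1.2.2.2 E (hE R hR) F (hF R hR)

lemma tailRing_subset_pRng {w : Λ} {E : Set Λ} (hE : E ∈ tailRing C w) :
    E ⊆ pRng C w := by
  refine hE {E | E ⊆ pRng C w} ⟨⟨⟨Set.empty_subset _, ?_, ?_, ?_⟩, fun E hE => hE⟩, ?_⟩
  · exact fun E hE F hF => Set.union_subset hE hF
  · exact fun E hE F _ => (Set.inter_subset_left).trans hE
  · exact fun E hE F _ => (Set.diff_subset).trans hE
  · rintro E ⟨a, ha, rfl⟩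
    exact pTail_subset_pRng ha

lemma tailRing_biUnion {w : Λ} {G : Set Λ} (hG : G.Finite) {T : Λ → Set Λ}
    (hT : ∀ γ ∈ G, T γ ∈ tailRing C w) : (⋃ γ ∈ G, T γ) ∈ tailRing C w := by
  classical
  have key : ∀ (s : Finset Λ), (∀ γ ∈ s, T γ ∈ tailRing C w) →
      (⋃ γ ∈ (s : Set Λ), T γ) ∈ tailRing C w := by
    intro s
    induction s using Finset.induction_on with
    | empty => intro _; simpa using tailRing_empty w
    | @insert a t ha ih =>
      intro hmem
      rw [Finset.coe_insert, Set.biUnion_insert]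
      exact tailRing_union (hmem a (Finset.mem_insert_self a t))
        (ih fun γ hγ => hmem γ (Finset.mem_insert_of_mem hγ))
  have := key hG.toFinset (fun γ hγ => hT γ ((Set.Finite.mem_toFinset hG).1 hγ))
  rwa [Set.Finite.coe_toFinset hG] at this

lemma tailRing_induction {w : Λ} (P : Set Λ → Prop)
    (hgen : ∀ a, C.r a = w → P (pTail C a))
    (hempty : P ∅)
    (hunion : ∀ E F, P E → P F → P (E ∪ F))
    (hinter : ∀ E F, P E → P F → P (E ∩ F))
    (hdiff : ∀ E F, P E → P F → P (E \ F)) :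
    ∀ E ∈ tailRing C w, P E := by
  intro E hE
  have h : E ∈ {E : Set Λ | P E ∧ E ⊆ pRng C w} := by
    refine hE _ ⟨⟨⟨⟨hempty, Set.empty_subset _⟩, ?_, ?_, ?_⟩, fun E hE => hE.2⟩, ?_⟩
    · exact fun E hE F hF => ⟨hunion E F hE.1 hF.1, Set.union_subset hE.2 hF.2⟩
    · exact fun E hE F hF => ⟨hinter E F hE.1 hF.1, Set.inter_subset_left.trans hE.2⟩
    · exact fun E hE F hF => ⟨hdiff E F hE.1 hF.1, Set.diff_subset.trans hE.2⟩
    · rintro E ⟨a, ha, rfl⟩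
      exact ⟨hgen a ha, pTail_subset_pRng ha⟩
  exact h.1

lemma dir_ext {v : Λ} {x : Set Λ} (hx : x ∈ lamStar C v) {a b : Λ}
    (ha : a ∈ x) (hb : b ∈ x) : ∃ m ∈ x, m ∈ pTail C a ∧ m ∈ pTail C b := by
  obtain ⟨m, ⟨h1, h2⟩, h3⟩ := hx.2.2.1 a ha b hb
  exact ⟨m, h3, h1, h2⟩

lemma pTail_mem_UC {v : Λ} {x : Set Λ} (hx : x ∈ lamStar C v) {a : Λ}
    (ha : a ∈ x) : pTail C a ∈ UC C v x :=
  ⟨gen_mem_tailRing (hx.2.1 ha), a, ha, Set.inter_subset_right⟩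

lemma UC_inter {v : Λ} {x : Set Λ} (hx : x ∈ lamStar C v) {E F : Set Λ}
    (hE : E ∈ UC C v x) (hF : F ∈ UC C v x) : E ∩ F ∈ UC C v x := by
  obtain ⟨hE1, a, ha, ha2⟩ := hE
  obtain ⟨hF1, b, hb, hb2⟩ := hF
  obtain ⟨m, hm, hma, hmb⟩ := dir_ext hx ha hb
  refine ⟨tailRing_inter hE1 hF1, m, hm, fun p ⟨hp1, hp2⟩ => ?_⟩
  exact ⟨ha2 ⟨hp1, pTail_trans hp2 hma⟩, hb2 ⟨hp1, pTail_trans hp2 hmb⟩⟩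

lemma UC_mono {v : Λ} {x : Set Λ} {E F : Set Λ} (hE : E ∈ UC C v x)
    (hEF : E ⊆ F) (hF : F ∈ tailRing C v) : F ∈ UC C v x := by
  obtain ⟨_, a, ha, ha2⟩ := hE
  exact ⟨hF, a, ha, ha2.trans hEF⟩

/-- The key structure lemma for elements of the tail ring relative to a
directed hereditary set. -/
lemma ring_dichotomy {v : Λ} {x : Set Λ} (hx : x ∈ lamStar C v) :
    ∀ E ∈ tailRing C v,
      (∃ β ∈ x, ∃ G : Set Λ, G.Finite ∧ (∀ γ ∈ G, x ∩ pTail C γ = ∅) ∧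
        pTail C β \ (⋃ γ ∈ G, pTail C γ) ⊆ E) ∨
      (∃ β ∈ x, ∃ G : Set Λ, G.Finite ∧ (∀ γ ∈ G, x ∩ pTail C γ = ∅) ∧
        pTail C β ∩ E ⊆ ⋃ γ ∈ G, pTail C γ) := by
  obtain ⟨x0, hx0⟩ := hx.1
  intro E hE
  refine tailRing_induction
    (fun E => (∃ β ∈ x, ∃ G : Set Λ, G.Finite ∧ (∀ γ ∈ G, x ∩ pTail C γ = ∅) ∧
        pTail C β \ (⋃ γ ∈ G, pTail C γ) ⊆ E) ∨
      (∃ β ∈ x, ∃ G : Set Λ, G.Finite ∧ (∀ γ ∈ G, x ∩ pTail C γ = ∅) ∧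
        pTail C β ∩ E ⊆ ⋃ γ ∈ G, pTail C γ))
    ?_ ?_ ?_ ?_ ?_ E hE
  · -- generators
    intro a ha
    by_cases hax : (x ∩ pTail C a).Nonempty
    · obtain ⟨m, hm1, hm2⟩ := hax
      left
      exact ⟨a, hx.2.2.2 m hm1 a hm2, ∅, Set.finite_empty, by simp, by simp⟩
    · right
      refine ⟨x0, hx0, {a}, Set.finite_singleton a, ?_, ?_⟩
      · intro γ hγ
        rw [Set.mem_singleton_iff] at hγ
        rw [hγ]
        exact Set.not_nonempty_iff_eq_empty.1 hax
      · intro p hp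
        simp only [Set.mem_iUnion]
        exact ⟨a, rfl, hp.2⟩
  · -- empty
    right
    exact ⟨x0, hx0, ∅, Set.finite_empty, by simp, by simp⟩
  · -- union
    intro E F hPE hPF
    rcases hPE with hQ | hN
    · left
      obtain ⟨β, hβ, G, h1, h2, h3⟩ := hQ
      exact ⟨β, hβ, G, h1, h2, h3.trans Set.subset_union_left⟩
    rcases hPF with hQ | hN'
    · left
      obtain ⟨β, hβ, G, h1, h2, h3⟩ := hQ
      exact ⟨β, hβ, G, h1, h2, h3.trans Set.subset_union_right⟩
    · right
      obtain ⟨β, hβ, G, h1, h2, h3⟩ := hN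
      obtain ⟨β', hβ', G', h1', h2', h3'⟩ := hN'
      obtain ⟨m, hm, hmβ, hmβ'⟩ := dir_ext hx hβ hβ'
      refine ⟨m, hm, G ∪ G', h1.union h1', ?_, ?_⟩
      · intro γ hγ
        rcases hγ with h | h
        exacts [h2 γ h, h2' γ h]
      · rintro p ⟨hp1, hp2 | hp2⟩
        · exact Set.biUnion_subset_biUnion_left Set.subset_union_left
            (h3 ⟨pTail_trans hp1 hmβ, hp2⟩)
        · exact Set.biUnion_subset_biUnion_left Set.subset_union_right
            (h3' ⟨pTail_trans hp1 hmβ', hp2⟩)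
  · -- intersection
    intro E F hPE hPF
    rcases hPE with hQ | hN
    · rcases hPF with hQ' | hN'
      · left
        obtain ⟨β, hβ, G, h1, h2, h3⟩ := hQ
        obtain ⟨β', hβ', G', h1', h2', h3'⟩ := hQ'
        obtain ⟨m, hm, hmβ, hmβ'⟩ := dir_ext hx hβ hβ'
        refine ⟨m, hm, G ∪ G', h1.union h1', ?_, ?_⟩
        · intro γ hγ
          rcases hγ with h | h
          exacts [h2 γ h, h2' γ h]
        · rintro p ⟨hp1, hp2⟩
          have hpG : p ∉ ⋃ γ ∈ G, pTail C γ := fun hc =>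
            hp2 (Set.biUnion_subset_biUnion_left Set.subset_union_left hc)
          have hpG' : p ∉ ⋃ γ ∈ G', pTail C γ := fun hc =>
            hp2 (Set.biUnion_subset_biUnion_left Set.subset_union_right hc)
          exact ⟨h3 ⟨pTail_trans hp1 hmβ, hpG⟩, h3' ⟨pTail_trans hp1 hmβ', hpG'⟩⟩
      · right
        obtain ⟨β', hβ', G', h1', h2', h3'⟩ := hN'
        exact ⟨β', hβ', G', h1', h2', fun p hp => h3' ⟨hp.1, hp.2.2⟩⟩
    · right
      obtain ⟨β, hβ, G, h1, h2, h3⟩ := hN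
      exact ⟨β, hβ, G, h1, h2, fun p hp => h3 ⟨hp.1, hp.2.1⟩⟩
  · -- difference
    intro E F hPE hPF
    rcases hPE with hQ | hN
    · rcases hPF with hQ' | hN'
      · right
        obtain ⟨β, hβ, G, h1, h2, h3⟩ := hQ
        obtain ⟨β', hβ', G', h1', h2', h3'⟩ := hQ'
        obtain ⟨m, hm, hmβ, hmβ'⟩ := dir_ext hx hβ hβ'
        refine ⟨m, hm, G', h1', h2', ?_⟩
        rintro p ⟨hp1, hp2⟩
        by_contra hc
        exact hp2.2 (h3' ⟨pTail_trans hp1 hmβ', hc⟩)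
      · left
        obtain ⟨β, hβ, G, h1, h2, h3⟩ := hQ
        obtain ⟨β', hβ', G', h1', h2', h3'⟩ := hN'
        obtain ⟨m, hm, hmβ, hmβ'⟩ := dir_ext hx hβ hβ'
        refine ⟨m, hm, G ∪ G', h1.union h1', ?_, ?_⟩
        · intro γ hγ
          rcases hγ with h | h
          exacts [h2 γ h, h2' γ h]
        · rintro p ⟨hp1, hp2⟩
          have hpG : p ∉ ⋃ γ ∈ G, pTail C γ := fun hc =>
            hp2 (Set.biUnion_subset_biUnion_left Set.subset_union_left hc)
          have hpG' : p ∉ ⋃ γ ∈ G', pTail C γ := fun hc =>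
            hp2 (Set.biUnion_subset_biUnion_left Set.subset_union_right hc)
          refine ⟨h3 ⟨pTail_trans hp1 hmβ, hpG⟩, fun hpF =>
            hpG' (h3' ⟨pTail_trans hp1 hmβ', hpF⟩)⟩
    · right
      obtain ⟨β, hβ, G, h1, h2, h3⟩ := hN
      exact ⟨β, hβ, G, h1, h2, fun p hp => h3 ⟨hp.1, hp.2.1⟩⟩

end Aux2

section Aux3

variable {Λ : Type u} {C : CategoryOfPaths Λ}

lemma Q_of_UC {v : Λ} {x : Set Λ} (hx : x ∈ lamStar C v) {E : Set Λ}
    (hE : E ∈ UC C v x) :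
    ∃ β ∈ x, ∃ G : Set Λ, G.Finite ∧ (∀ γ ∈ G, x ∩ pTail C γ = ∅) ∧
      pTail C β \ (⋃ γ ∈ G, pTail C γ) ⊆ E := by
  rcases ring_dichotomy hx E hE.1 with hQ | hN
  · exact hQ
  · exfalso
    obtain ⟨α, hα, hsub⟩ := hE.2
    obtain ⟨β, hβ, G, _, h2, h3⟩ := hN
    obtain ⟨m, hm, hmα, hmβ⟩ := dir_ext hx hα hβ
    have hmE : m ∈ E := hsub ⟨hm, hmα⟩
    have := h3 ⟨hmβ, hmE⟩
    rw [Set.mem_iUnion₂] at this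
    obtain ⟨γ, hγ, hmγ⟩ := this
    have := h2 γ hγ
    rw [Set.eq_empty_iff_forall_notMem] at this
    exact this m ⟨hm, hmγ⟩

/-- neighborhood basis for the generated topology on `X_v`. -/
lemma nbhd_basis {v : Λ} {U : Set (Xv C v)}
    (hU : TopologicalSpace.GenerateOpen
      {t | ∃ E ∈ tailRing C v, t = {x : Xv C v | E ∈ UC C v x.1}} U) :
    ∀ xh : Xv C v, xh ∈ U →
      ∃ E, E ∈ UC C v xh.1 ∧ {y : Xv C v | E ∈ UC C v y.1} ⊆ U := by
  induction hU with
  | basic t ht =>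
    obtain ⟨E, _, rfl⟩ := ht
    intro xh hxh
    exact ⟨E, hxh, le_refl _⟩
  | univ =>
    intro xh _
    obtain ⟨a, ha⟩ := xh.2.1
    exact ⟨pTail C a, pTail_mem_UC xh.2 ha, Set.subset_univ _⟩
  | inter s t _ _ ihs iht =>
    intro xh hxh
    obtain ⟨E1, h1, h1s⟩ := ihs xh hxh.1
    obtain ⟨E2, h2, h2s⟩ := iht xh hxh.2
    refine ⟨E1 ∩ E2, UC_inter xh.2 h1 h2, fun y hy => ?_⟩
    exact ⟨h1s (UC_mono hy Set.inter_subset_left h1.1),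
      h2s (UC_mono hy Set.inter_subset_right h2.1)⟩
  | sUnion S _ ih =>
    intro xh hxh
    obtain ⟨t, htS, hxt⟩ := hxh
    obtain ⟨E, h1, h2⟩ := ih t htS xh hxt
    exact ⟨E, h1, h2.trans (Set.subset_sUnion_of_mem htS)⟩

lemma comp_pTail_comp {β γ τ : Λ} (h : C.s β = C.r γ) (hτ : τ ∈ pTail C γ) :
    C.comp β τ ∈ pTail C (C.comp β γ) := by
  obtain ⟨t, ht, rfl⟩ := hτ
  rw [← C.comp_assoc h ht]
  exact comp_mem_pTail (by rw [C.s_comp h]; exact ht)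

lemma shift_decomp {a ρ m : Λ} (hr : C.s a = C.r ρ) (hm : m ∈ pTail C (C.comp a ρ)) :
    ∃ ρ', ρ' ∈ pTail C ρ ∧ C.s a = C.r ρ' ∧ m = C.comp a ρ' := by
  obtain ⟨t, ht, rfl⟩ := hm
  have ht' : C.s ρ = C.r t := by rwa [C.s_comp hr] at ht
  exact ⟨C.comp ρ t, ⟨t, ht', rfl⟩, by rw [C.r_comp ht']; exact hr,
    C.comp_assoc hr ht'⟩

lemma pShift_directed {y : Set Λ} (hy : pDirected C y) (a : Λ) :
    pDirected C (pShift C a y) := by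
  rintro ρ1 ⟨hr1, hm1⟩ ρ2 ⟨hr2, hm2⟩
  obtain ⟨m, ⟨hma, hmb⟩, hmy⟩ := hy _ hm1 _ hm2
  obtain ⟨ρ', hρ'1, hr', rfl⟩ := shift_decomp hr1 hma
  obtain ⟨ρ'', hρ''2, hr'', heq⟩ := shift_decomp hr2 hmb
  have : ρ' = ρ'' := C.left_cancel hr' hr'' heq
  subst this
  exact ⟨ρ', ⟨hρ'1, hρ''2⟩, hr', hmy⟩

lemma pShift_mem_lamStar {v : Λ} {x : Set Λ} (hx : x ∈ lamStar C v) {a : Λ}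
    (ha : a ∈ x) : pShift C a x ∈ lamStar C (C.s a) := by
  refine ⟨⟨C.s a, (C.r_s a).symm, by rw [C.comp_id]; exact ha⟩,
    fun b hb => hb.1.symm, pShift_directed hx.2.2.1 a, ?_⟩
  rintro γ ⟨hrγ, hγx⟩ ρ hρ
  have hrρ : C.s a = C.r ρ := by rw [hrγ, r_of_mem_pTail hρ]
  obtain ⟨t, ht, rfl⟩ := hρ
  refine ⟨hrρ, hx.2.2.2 _ hγx _ ?_⟩
  exact comp_pTail_comp hrρ ⟨t, ht, rfl⟩

/-- shifting a maximal set by one of its elements yields a maximal set. -/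
lemma pShift_max {v : Λ} {y : Set Λ} (hy : y ∈ lamStarStar C v) {β : Λ}
    (hβ : β ∈ y) : pShift C β y ∈ lamStarStar C (C.s β) := by
  refine ⟨fun b hb => hb.1.symm, pShift_directed hy.2.1 β, ?_⟩
  intro z hz1 hz2 hz3
  set y' := y ∪ {a | ∃ γ ∈ z, C.comp β γ ∈ pTail C a} with hy'
  have hrz : ∀ γ ∈ z, C.s β = C.r γ := fun γ hγ => (hz1 hγ).symm
  have hy'sub : y' ⊆ pRng C v := by
    rintro a (ha | ⟨γ, hγ, hpa⟩)
    · exact hy.1 ha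
    · show C.r a = v
      rw [← r_of_mem_pTail hpa, C.r_comp (hrz γ hγ)]
      exact hy.1 hβ
  have hkey : ∀ a ∈ y, ∀ γ ∈ z,
      ∃ m, (m ∈ pTail C a ∧ m ∈ pTail C (C.comp β γ)) ∧ m ∈ y' := by
    intro a ha γ hγ
    obtain ⟨η, ⟨hηa, hηβ⟩, hηy⟩ := hy.2.1 a ha β hβ
    obtain ⟨ρ, hrρ, rfl⟩ := hηβ
    have hρz : ρ ∈ z := hz3 ⟨hrρ, hηy⟩
    obtain ⟨τ, ⟨hτρ, hτγ⟩, hτz⟩ := hz2 ρ hρz γ hγ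
    refine ⟨C.comp β τ, ⟨?_, comp_pTail_comp (hrz γ hγ) hτγ⟩,
      Or.inr ⟨τ, hτz, mem_pTail_self C _⟩⟩
    exact pTail_trans (comp_pTail_comp hrρ hτρ) hηa
  have hy'dir : pDirected C y' := by
    rintro a (ha | ⟨γa, hγa, hpa⟩) b (hb | ⟨γb, hγb, hpb⟩)
    · obtain ⟨m, hm, hmy⟩ := hy.2.1 a ha b hb
      exact ⟨m, hm, Or.inl hmy⟩
    · obtain ⟨m, ⟨h1, h2⟩, h3⟩ := hkey a ha γb hγb
      exact ⟨m, ⟨h1, pTail_trans h2 hpb⟩, h3⟩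
    · obtain ⟨m, ⟨h1, h2⟩, h3⟩ := hkey b hb γa hγa
      exact ⟨m, ⟨pTail_trans h2 hpa, h1⟩, h3⟩
    · obtain ⟨τ, ⟨hτρ, hτγ⟩, hτz⟩ := hz2 γa hγa γb hγb
      refine ⟨C.comp β τ, ⟨?_, ?_⟩, Or.inr ⟨τ, hτz, mem_pTail_self C _⟩⟩
      · exact pTail_trans (comp_pTail_comp (hrz γa hγa) hτρ) hpa
      · exact pTail_trans (comp_pTail_comp (hrz γb hγb) hτγ) hpb
  have hy'eq : y' = y := hy.2.2 y' hy'sub hy'dir Set.subset_union_left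
  refine Set.Subset.antisymm ?_ hz3
  intro γ hγ
  have : C.comp β γ ∈ y' := Or.inr ⟨γ, hγ, mem_pTail_self C _⟩
  rw [hy'eq] at this
  exact ⟨hrz γ hγ, this⟩

lemma mulStar_lamStar {v : Λ} {α' : Λ} (hα' : C.r α' = v) {z' : Set Λ}
    (hz' : z' ∈ lamStarStar C (C.s α')) : pMulStar C α' z' ∈ lamStar C v := by
  have hrz : ∀ γ ∈ z', C.s α' = C.r γ := fun γ hγ => (hz'.1 hγ).symm
  have hαmem : α' ∈ pMulStar C α' z' := by
    refine ⟨C.s α', vertex_mem_of_max (C.r_s α') hz', (C.r_s α').symm, ?_⟩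
    rw [C.comp_id]; exact mem_pTail_self C α'
  refine ⟨⟨α', hαmem⟩, ?_, ?_, ?_⟩
  · rintro a ⟨γ, hγ, hr, hpa⟩
    show C.r a = v
    rw [← r_of_mem_pTail hpa, C.r_comp hr]
    exact hα'
  · rintro a ⟨γa, hγa, hra, hpa⟩ b ⟨γb, hγb, hrb, hpb⟩
    obtain ⟨m, ⟨hma, hmb⟩, hmz⟩ := hz'.2.1 γa hγa γb hγb
    refine ⟨C.comp α' m, ⟨?_, ?_⟩, m, hmz, hrz m hmz, mem_pTail_self C _⟩
    · exact pTail_trans (comp_pTail_comp hra hma) hpa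
    · exact pTail_trans (comp_pTail_comp hrb hmb) hpb
  · rintro p ⟨ρ, hρ, hr, hpp⟩ a hpa
    exact ⟨ρ, hρ, hr, pTail_trans hpp hpa⟩

lemma mulStar_max {v : Λ} {α' : Λ} (hα' : C.r α' = v) {z' : Set Λ}
    (hz' : z' ∈ lamStarStar C (C.s α')) : pMulStar C α' z' ∈ lamStarStar C v := by
  have hstar := mulStar_lamStar hα' hz'
  refine ⟨hstar.2.1, hstar.2.2.1, ?_⟩
  intro y' h1 h2 h3
  have hz'' : z' = pShift C α' y' := by
    refine (hz'.2.2 _ (fun b hb => hb.1.symm) (pShift_directed h2 α') ?_).symm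
    intro γ hγ
    exact ⟨(hz'.1 hγ).symm, h3 ⟨γ, hγ, (hz'.1 hγ).symm, mem_pTail_self C _⟩⟩
  refine Set.Subset.antisymm ?_ h3
  intro ξ hξ
  have hαmem : α' ∈ pMulStar C α' z' := by
    refine ⟨C.s α', vertex_mem_of_max (C.r_s α') hz', (C.r_s α').symm, ?_⟩
    rw [C.comp_id]; exact mem_pTail_self C α'
  obtain ⟨m, ⟨hmξ, hmα⟩, hmy'⟩ := h2 ξ hξ α' (h3 hαmem)
  obtain ⟨ρ, hrρ, rfl⟩ := hmα
  have hρz : ρ ∈ z' := by rw [hz'']; exact ⟨hrρ, hmy'⟩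
  exact ⟨ρ, hρz, hrρ, hmξ⟩

end Aux3

section Aux4

variable {Λ : Type u} {C : CategoryOfPaths Λ}

/-- nonempty intersection of a decreasing sequence of nonempty subsets of a
finite set. -/
lemma iInter_nonempty_of_antitone {X : Type*} (A : ℕ → Set X)
    (hanti : ∀ m m', m ≤ m' → A m' ⊆ A m) (hfin : (A 0).Finite)
    (hne : ∀ m, (A m).Nonempty) : (⋂ m, A m).Nonempty := by
  by_contra hc
  rw [Set.not_nonempty_iff_eq_empty] at hc
  have h1 : ∀ ε ∈ A 0, ∃ m, ε ∉ A m := by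
    intro ε hε
    by_contra hcc
    push_neg at hcc
    have : ε ∈ ⋂ m, A m := Set.mem_iInter.2 hcc
    rw [hc] at this
    exact this
  choose! μ hμ using h1
  obtain ⟨m0, hm0⟩ := (hfin.image μ).bddAbove
  obtain ⟨ε, hε⟩ := hne m0
  have hε0 : ε ∈ A 0 := hanti 0 m0 (Nat.zero_le _) hε
  exact hμ ε hε0 (hanti (μ ε) m0 (hm0 (Set.mem_image_of_mem μ hε0)) hε)

/-- a chain through an inverse system of finite nonempty sets. -/
lemma chain_of_system {X : Type*} (M : ℕ → Set X) (R : X → X → Prop)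
    (hfin : ∀ n, (M n).Finite) (hne : ∀ n, (M n).Nonempty)
    (hlink : ∀ n, ∀ ε' ∈ M (n + 1), ∃ ε ∈ M n, R ε' ε) :
    ∃ f : ℕ → X, (∀ n, f n ∈ M n) ∧ ∀ n, R (f (n + 1)) (f n) := by
  classical
  let T : ℕ → ℕ → Set X := fun m =>
    Nat.rec (motive := fun _ => ℕ → Set X) (fun n => M n)
      (fun _ Tm n => {ε ∈ M n | ∃ ε' ∈ Tm (n + 1), R ε' ε}) m
  have hT0 : ∀ n, T 0 n = M n := fun n => rfl
  have hTs : ∀ m n, T (m + 1) n = {ε ∈ M n | ∃ ε' ∈ T m (n + 1), R ε' ε} :=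
    fun m n => rfl
  have hTsub : ∀ m n, T m n ⊆ M n := by
    intro m
    cases m with
    | zero => exact fun n => subset_rfl
    | succ m => exact fun n => Set.sep_subset _ _
  have hTmono : ∀ m n, T (m + 1) n ⊆ T m n := by
    intro m
    induction m with
    | zero => exact fun n => Set.sep_subset _ _
    | succ m ih =>
      intro n ε hε
      obtain ⟨hM, ε', hε', hR⟩ := hε
      exact ⟨hM, ε', ih (n + 1) hε', hR⟩
  have hTanti : ∀ n m m', m ≤ m' → T m' n ⊆ T m n := by
    intro n m m' h
    induction h with
    | refl => exact subset_rfl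
    | @step m'' h ih => exact ih.trans' (hTmono m'' n)
  have hTne : ∀ m n, (T m n).Nonempty := by
    intro m
    induction m with
    | zero => exact hne
    | succ m ih =>
      intro n
      obtain ⟨ε', hε'⟩ := ih (n + 1)
      obtain ⟨ε, hε, hR⟩ := hlink n ε' (hTsub m (n + 1) hε')
      exact ⟨ε, (hTs m n) ▸ ⟨hε, ε', hε', hR⟩⟩
  set S : ℕ → Set X := fun n => ⋂ m, T m n with hS
  have hSne : ∀ n, (S n).Nonempty := by
    intro n
    exact iInter_nonempty_of_antitone (fun m => T m n) (hTanti n)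
      ((hfin n).subset (hTsub 0 n)) (fun m => hTne m n)
  have hSM : ∀ n, S n ⊆ M n := fun n =>
    (Set.iInter_subset (fun m => T m n) 0).trans (by rw [hT0])
  have hstep : ∀ n, ∀ ε ∈ S n, ∃ ε' ∈ S (n + 1), R ε' ε := by
    intro n ε hε
    have hA : (⋂ m, {ε' ∈ T m (n + 1) | R ε' ε}).Nonempty := by
      refine iInter_nonempty_of_antitone _ ?_ ?_ ?_
      · intro m m' h p hp
        exact ⟨hTanti (n + 1) m m' h hp.1, hp.2⟩
      · exact ((hfin (n + 1)).subset (hTsub 0 (n + 1))).subset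
          (Set.sep_subset _ _)
      · intro m
        have hεm : ε ∈ T (m + 1) n := Set.mem_iInter.1 hε (m + 1)
        rw [hTs] at hεm
        obtain ⟨_, ε', hε', hR⟩ := hεm
        exact ⟨ε', hε', hR⟩
    obtain ⟨ε', hε'⟩ := hA
    have h1 : ε' ∈ S (n + 1) := Set.mem_iInter.2 fun m => (Set.mem_iInter.1 hε' m).1
    exact ⟨ε', h1, (Set.mem_iInter.1 hε' 0).2⟩
  have hstep' : ∀ n, ∀ ε : X, ε ∈ S n → ∃ ε' : X, ε' ∈ S (n + 1) ∧ R ε' ε := by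
    intro n ε hε
    obtain ⟨ε', h1, h2⟩ := hstep n ε hε
    exact ⟨ε', h1, h2⟩
  choose! st hst1 hst2 using hstep'
  obtain ⟨ε0, hε0⟩ := hSne 0
  let f : ℕ → X := fun n => Nat.rec ε0 (fun n fn => st n fn) n
  have hfS : ∀ n, f n ∈ S n := by
    intro n
    induction n with
    | zero => exact hε0
    | succ n ih => exact hst1 n (f n) ih
  refine ⟨f, fun n => hSM n (hfS n), fun n => hst2 n (f n) (hfS n)⟩

/-- every maximal directed set over a countable category is a union of a
chain of segments. -/
lemma exists_chain_rep [Countable Λ] {u : Λ} (hu : C.r u = u) {z : Set Λ}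
    (hz : z ∈ lamStarStar C u) :
    ∃ c : ℕ → Λ, (∀ n, c n ∈ z) ∧ (∀ n, c (n + 1) ∈ pTail C (c n)) ∧
      ∀ d ∈ z, ∃ n, c n ∈ pTail C d := by
  classical
  have hne : z.Nonempty := ⟨u, vertex_mem_of_max hu hz⟩
  obtain ⟨f, hf⟩ := (Set.to_countable z).exists_eq_range hne
  have hfz : ∀ n, f n ∈ z := fun n => hf ▸ Set.mem_range_self n
  have hd : ∀ a b : Λ, a ∈ z → b ∈ z →
      ∃ m : Λ, m ∈ z ∧ m ∈ pTail C a ∧ m ∈ pTail C b := by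
    intro a b ha hb
    obtain ⟨m, ⟨h1, h2⟩, h3⟩ := hz.2.1 a ha b hb
    exact ⟨m, h3, h1, h2⟩
  choose! F hF1 hF2 hF3 using hd
  let c : ℕ → Λ := fun n => Nat.rec (f 0) (fun n cn => F cn (f (n + 1))) n
  have hcz : ∀ n, c n ∈ z := by
    intro n
    induction n with
    | zero => exact hfz 0
    | succ n ih => exact hF1 (c n) (f (n + 1)) ih (hfz (n + 1))
  refine ⟨c, hcz, fun n => hF2 (c n) (f (n + 1)) (hcz n) (hfz (n + 1)), ?_⟩
  intro d hd'
  have : ∃ n, d = f n := by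
    have := hf ▸ hd'
    obtain ⟨n, hn⟩ := this
    exact ⟨n, hn.symm⟩
  obtain ⟨n, rfl⟩ := this
  cases n with
  | zero => exact ⟨0, mem_pTail_self C _⟩
  | succ n => exact ⟨n + 1, hF3 (c n) (f (n + 1)) (hcz n) (hfz (n + 1))⟩

/-- Key lemma: a maximal directed set meets every finite exhaustive set. -/
lemma max_hits_exhaustive [Countable Λ] (hfa : FinitelyAligned C) {u : Λ}
    (hu : C.r u = u) {z : Set Λ} (hz : z ∈ lamStarStar C u) {F : Set Λ}
    (hFfin : F.Finite) (hFex : ExhaustiveAt C u F) : (z ∩ F).Nonempty := by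
  classical
  obtain ⟨c, hcz, hcchain, hccover⟩ := exists_chain_rep hu hz
  choose G hGfin hGeq using hfa
  have hmem : ∀ a γ ε, ε ∈ G a γ → ε ∈ pTail C a ∩ pTail C γ := by
    intro a γ ε hε
    have : ε ∈ ⋃ ε' ∈ G a γ, pTail C ε' := Set.mem_biUnion hε (mem_pTail_self C ε)
    rwa [← hGeq] at this
  set M : ℕ → Set Λ := fun n => ⋃ γ ∈ F, G (c n) γ with hM
  have hMfin : ∀ n, (M n).Finite := fun n => hFfin.biUnion fun γ _ => hGfin (c n) γ
  have hMne : ∀ n, (M n).Nonempty := by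
    intro n
    obtain ⟨γ, hγF, m, hm⟩ := hFex (c n) (hz.1 (hcz n))
    rw [hGeq] at hm
    obtain ⟨ε, hε, -⟩ := Set.mem_iUnion₂.1 hm
    exact ⟨ε, Set.mem_biUnion hγF hε⟩
  have hcmono : ∀ m k, m ≤ k → c k ∈ pTail C (c m) := by
    intro m k h
    induction h with
    | refl => exact mem_pTail_self C _
    | @step k' h ih => exact pTail_trans (hcchain k') ih
  have hMlink : ∀ n, ∀ ε' ∈ M (n + 1), ∃ ε ∈ M n, ε' ∈ pTail C ε := by
    intro n ε' hε'
    obtain ⟨γ, hγF, hε'G⟩ := Set.mem_iUnion₂.1 hε'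
    have h1 : ε' ∈ pTail C (c (n + 1)) ∩ pTail C γ := hmem _ _ _ hε'G
    have h2 : ε' ∈ pTail C (c n) ∩ pTail C γ :=
      ⟨pTail_trans h1.1 (hcchain n), h1.2⟩
    rw [hGeq] at h2
    obtain ⟨ε, hε, hε2⟩ := Set.mem_iUnion₂.1 h2
    exact ⟨ε, Set.mem_biUnion hγF hε, hε2⟩
  obtain ⟨e, heM, hechain⟩ := chain_of_system M (fun ε' ε => ε' ∈ pTail C ε)
    hMfin hMne hMlink
  have hemono : ∀ m k, m ≤ k → e k ∈ pTail C (e m) := by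
    intro m k h
    induction h with
    | refl => exact mem_pTail_self C _
    | @step k' h ih => exact pTail_trans (hechain k') ih
  have hec : ∀ n, e n ∈ pTail C (c n) := by
    intro n
    obtain ⟨γ, hγF, hεG⟩ := Set.mem_iUnion₂.1 (heM n)
    exact (hmem _ _ _ hεG).1
  set z'' : Set Λ := z ∪ {a | ∃ n, e n ∈ pTail C a} with hz''
  have hecov : ∀ a ∈ z, ∃ m, ∀ k, m ≤ k → e k ∈ pTail C a := by
    intro a ha
    obtain ⟨m, hm⟩ := hccover a ha
    exact ⟨m, fun k hk =>
      pTail_trans (pTail_trans (hec k) (hcmono m k hk)) hm⟩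
  have hz''dir : pDirected C z'' := by
    rintro a (ha | ⟨na, hna⟩) b (hb | ⟨nb, hnb⟩)
    · obtain ⟨m, hm, h3⟩ := hz.2.1 a ha b hb
      exact ⟨m, hm, Or.inl h3⟩
    · obtain ⟨m, hm⟩ := hecov a ha
      refine ⟨e (max m nb), ⟨hm _ (le_max_left m nb), ?_⟩,
        Or.inr ⟨max m nb, mem_pTail_self C _⟩⟩
      exact pTail_trans (hemono nb _ (le_max_right m nb)) hnb
    · obtain ⟨m, hm⟩ := hecov b hb
      refine ⟨e (max m na), ⟨?_, hm _ (le_max_left m na)⟩,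
        Or.inr ⟨max m na, mem_pTail_self C _⟩⟩
      exact pTail_trans (hemono na _ (le_max_right m na)) hna
    · refine ⟨e (max na nb), ⟨?_, ?_⟩, Or.inr ⟨max na nb, mem_pTail_self C _⟩⟩
      · exact pTail_trans (hemono na _ (le_max_left na nb)) hna
      · exact pTail_trans (hemono nb _ (le_max_right na nb)) hnb
  have hz''sub : z'' ⊆ pRng C u := by
    rintro a (ha | ⟨n, hn⟩)
    · exact hz.1 ha
    · show C.r a = u
      rw [← r_of_mem_pTail hn, r_of_mem_pTail (hec n)]
      exact hz.1 (hcz n)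
  have hz''eq : z'' = z := hz.2.2 z'' hz''sub hz''dir Set.subset_union_left
  have he0z : e 0 ∈ z := by
    have : e 0 ∈ z'' := Or.inr ⟨0, mem_pTail_self C _⟩
    rwa [hz''eq] at this
  obtain ⟨γ0, hγ0F, hε0G⟩ := Set.mem_iUnion₂.1 (heM 0)
  exact ⟨γ0, hereditary_of_max hz (e 0) he0z γ0 (hmem _ _ _ hε0G).2, hγ0F⟩

end Aux4

/-- Theorem 7.2. `C ∈ vΛ*` lies in the closure of `vΛ**` in
`X_v` iff for every `α ∈ C` there is `α' ∈ C ∩ αΛ` such that `σ^{α'}(C)` meets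
every finite exhaustive subset of `s(α')Λ`. -/
theorem statement13 {Λ : Type u} [Countable Λ] (C : CategoryOfPaths Λ)
    (hfa : FinitelyAligned C) (v : Λ) (hv : C.r v = v)
    (x : Set Λ) (hx : x ∈ lamStar C v) :
    (⟨x, hx⟩ : Xv C v) ∈
        @closure _ (XvTop C v) {y : Xv C v | y.1 ∈ lamStarStar C v} ↔
      ∀ α ∈ x, ∃ α' ∈ x, α' ∈ pTail C α ∧
        ∀ F : Set Λ, F ⊆ pRng C (C.s α') → F.Finite → ExhaustiveAt C (C.s α') F →
          (pShift C α' x ∩ F).Nonempty := by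
  classical
  choose Gfa hGfin hGeq using hfa
  have hGmem : ∀ a γ ε, ε ∈ Gfa a γ → ε ∈ pTail C a ∩ pTail C γ := by
    intro a γ ε hε
    have : ε ∈ ⋃ ε' ∈ Gfa a γ, pTail C ε' :=
      Set.mem_biUnion hε (mem_pTail_self C ε)
    rwa [← hGeq] at this
  have hfa' : FinitelyAligned C := fun a b => ⟨Gfa a b, hGfin a b, hGeq a b⟩
  set S : Set (Xv C v) := {y : Xv C v | y.1 ∈ lamStarStar C v} with hS
  have hchar : (⟨x, hx⟩ : Xv C v) ∈ @closure _ (XvTop C v) S ↔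
      ∀ E ∈ UC C v x, ∃ y, y ∈ lamStar C v ∧ y ∈ lamStarStar C v ∧
        E ∈ UC C v y := by
    constructor
    · intro h E hE
      have hopen : @IsOpen (Xv C v) (XvTop C v) {y : Xv C v | E ∈ UC C v y.1} :=
        TopologicalSpace.GenerateOpen.basic _ ⟨E, hE.1, rfl⟩
      obtain ⟨yh, hy1, hy2⟩ :=
        (@mem_closure_iff (Xv C v) (XvTop C v) ⟨x, hx⟩ S).1 h _ hopen hE
      exact ⟨yh.1, yh.2, hy2, hy1⟩
    · intro h
      rw [@mem_closure_iff (Xv C v) (XvTop C v) ⟨x, hx⟩ S]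
      intro o ho hxo
      have ho' : TopologicalSpace.GenerateOpen
          {t | ∃ E ∈ tailRing C v, t = {x : Xv C v | E ∈ UC C v x.1}} o := ho
      obtain ⟨E, hE1, hE2⟩ := nbhd_basis ho' ⟨x, hx⟩ hxo
      obtain ⟨y, hy1, hy2, hy3⟩ := h E hE1
      exact ⟨⟨y, hy1⟩, hE2 hy3, hy2⟩
  rw [hchar]
  constructor
  · -- closure ⇒ hitting condition
    intro hcl α hα
    by_contra hcon
    push_neg at hcon
    obtain ⟨F, hF1, hF2, hF3, hF4⟩ := hcon α hα (mem_pTail_self C α)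
    have hsγ : ∀ γ ∈ F, C.s α = C.r γ := fun γ hγ => (hF1 hγ).symm
    set E : Set Λ := pTail C α \ ⋃ γ ∈ F, pTail C (C.comp α γ) with hEdef
    have hEring : E ∈ tailRing C v := by
      refine tailRing_diff (gen_mem_tailRing (hx.2.1 hα))
        (tailRing_biUnion hF2 fun γ hγ => gen_mem_tailRing ?_)
      rw [C.r_comp (hsγ γ hγ)]
      exact hx.2.1 hα
    have hEUC : E ∈ UC C v x := by
      refine ⟨hEring, α, hα, ?_⟩
      rintro p ⟨hp1, hp2⟩
      refine ⟨hp2, fun hc => ?_⟩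
      obtain ⟨γ, hγ, hpγ⟩ := Set.mem_iUnion₂.1 hc
      have hγsh : γ ∈ pShift C α x ∩ F :=
        ⟨⟨hsγ γ hγ, hx.2.2.2 p hp1 _ hpγ⟩, hγ⟩
      rw [hF4] at hγsh
      exact hγsh
    obtain ⟨y, hyStar, hyMax, hyUC⟩ := hcl E hEUC
    obtain ⟨β, hβy, hβsub⟩ := hyUC.2
    have hβE : β ∈ E := hβsub ⟨hβy, mem_pTail_self C β⟩
    obtain ⟨δ, hsδ, hβδ⟩ := hβE.1
    have hsβ : C.s β = C.s δ := by rw [hβδ]; exact C.s_comp hsδ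
    set F' : Set Λ :=
      {π | C.s δ = C.r π ∧ C.comp δ π ∈ ⋃ γ ∈ F, Gfa δ γ} with hF'def
    have hF'fin : F'.Finite := by
      refine Set.Finite.of_finite_image
        (((hF2.biUnion fun γ _ => hGfin δ γ)).subset ?_)
        (fun π1 h1 π2 h2 heq => C.left_cancel h1.1 h2.1 heq)
      rintro _ ⟨π, hπ, rfl⟩
      exact hπ.2
    have hF'sub : F' ⊆ pRng C (C.s β) := by
      intro π hπ
      show C.r π = C.s β
      rw [← hπ.1, hsβ]
    have hF'ex : ExhaustiveAt C (C.s β) F' := by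
      intro ρ hρ
      have hrρ : C.s δ = C.r ρ := by rw [hρ, hsβ]
      obtain ⟨γ, hγF, m, hm1, hm2⟩ :=
        hF3 (C.comp δ ρ) (by rw [C.r_comp hrρ, ← hsδ])
      have hmδγ : m ∈ pTail C δ ∩ pTail C γ :=
        ⟨pTail_trans hm1 (comp_mem_pTail hrρ), hm2⟩
      rw [hGeq] at hmδγ
      obtain ⟨ε, hεG, hmε⟩ := Set.mem_iUnion₂.1 hmδγ
      obtain ⟨ε', hrε', rfl⟩ := (hGmem δ γ ε hεG).1
      refine ⟨ε', ⟨hrε', Set.mem_biUnion hγF hεG⟩, ?_⟩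
      obtain ⟨ρ1, hρ1, hr1, hm1'⟩ := shift_decomp hrρ hm1
      obtain ⟨ρ2, hρ2, hr2, hm2'⟩ := shift_decomp hrε' hmε
      have : ρ1 = ρ2 := C.left_cancel hr1 hr2 (hm1'.symm.trans hm2')
      exact ⟨ρ1, hρ1, this ▸ hρ2⟩
    obtain ⟨ε', hε'sh, hε'F'⟩ := max_hits_exhaustive hfa' (C.r_s β)
      (pShift_max hyMax hβy) hF'fin hF'ex
    obtain ⟨hrε'2, hcy⟩ := hε'sh
    have hmemE : C.comp β ε' ∈ E := hβsub ⟨hcy, comp_mem_pTail hrε'2⟩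
    obtain ⟨γ1, hγ1F, hG1⟩ := Set.mem_iUnion₂.1 hε'F'.2
    have h1 : C.comp δ ε' ∈ pTail C γ1 := (hGmem _ _ _ hG1).2
    have h2 : C.comp β ε' = C.comp α (C.comp δ ε') := by
      rw [hβδ]; exact C.comp_assoc hsδ hε'F'.1
    have h3 : C.comp β ε' ∈ pTail C (C.comp α γ1) := by
      rw [h2]; exact comp_pTail_comp (hsγ γ1 hγ1F) h1
    exact hmemE.2 (Set.mem_biUnion hγ1F h3)
  · -- hitting condition ⇒ closure
    intro hRHS E hE
    obtain ⟨β, hβx, G, hGfin', hGempty, hGsub⟩ := Q_of_UC hx hE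
    obtain ⟨α', hα'x, hα'β, hhit⟩ := hRHS β hβx
    have hα'v : C.r α' = v := hx.2.1 hα'x
    set W : Set Λ := ⋃ γ ∈ G, Gfa α' γ with hWdef
    have hWfin : W.Finite := hGfin'.biUnion fun γ _ => hGfin α' γ
    set P : Set Λ := {π | C.s α' = C.r π ∧ C.comp α' π ∈ W} with hPdef
    have hPfin : P.Finite := by
      refine Set.Finite.of_finite_image (hWfin.subset ?_)
        (fun π1 h1 π2 h2 heq => C.left_cancel h1.1 h2.1 heq)
      rintro _ ⟨π, hπ, rfl⟩
      exact hπ.2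
    have hPsub : P ⊆ pRng C (C.s α') := fun π hπ => hπ.1.symm
    have hPnotex : ¬ ExhaustiveAt C (C.s α') P := by
      intro hex
      obtain ⟨π, ⟨⟨hrπ, hcompx⟩, hπP⟩⟩ := hhit P hPsub hPfin hex
      obtain ⟨γ, hγG, hmemG⟩ := Set.mem_iUnion₂.1 hπP.2
      have hempty := hGempty γ hγG
      rw [Set.eq_empty_iff_forall_notMem] at hempty
      exact hempty _ ⟨hcompx, (hGmem _ _ _ hmemG).2⟩
    rw [ExhaustiveAt] at hPnotex
    push_neg at hPnotex
    obtain ⟨e, hre, hemeets⟩ := hPnotex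
    obtain ⟨z', hz'max, hez'⟩ := exists_max_above hre
    have hz'P : ∀ π ∈ P, z' ∩ pTail C π = ∅ := by
      intro π hπ
      rw [Set.eq_empty_iff_forall_notMem]
      rintro p ⟨hpz, hpπ⟩
      obtain ⟨m, ⟨hm1, hm2⟩, hm3⟩ := hz'max.2.1 p hpz e hez'
      exact hemeets π hπ ⟨m, hm2, pTail_trans hm1 hpπ⟩
    refine ⟨pMulStar C α' z', mulStar_lamStar hα'v hz'max,
      mulStar_max hα'v hz'max, hE.1, α', ?_, ?_⟩
    · exact ⟨C.s α', vertex_mem_of_max (C.r_s α') hz'max, (C.r_s α').symm,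
        by rw [C.comp_id]; exact mem_pTail_self C α'⟩
    · rintro a ⟨⟨ρ, hρz, hrρ, hpa⟩, haα'⟩
      obtain ⟨ρ1, hr1, rfl⟩ := haα'
      obtain ⟨ρh, hρh1, hrρh, heqc⟩ := shift_decomp hr1 hpa
      have hρρh : ρ = ρh := C.left_cancel hrρ hrρh heqc
      have hρ1z : ρ1 ∈ z' :=
        hereditary_of_max hz'max ρ hρz ρ1 (hρρh ▸ hρh1)
      refine hGsub ⟨pTail_trans (comp_mem_pTail hr1) hα'β, fun hc => ?_⟩
      obtain ⟨γ, hγG, hpγ⟩ := Set.mem_iUnion₂.1 hc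
      have hmem2 : C.comp α' ρ1 ∈ pTail C α' ∩ pTail C γ :=
        ⟨comp_mem_pTail hr1, hpγ⟩
      rw [hGeq] at hmem2
      obtain ⟨ε, hεG, hpε⟩ := Set.mem_iUnion₂.1 hmem2
      obtain ⟨π, hrπ, rfl⟩ := (hGmem α' γ ε hεG).1
      have hπP : π ∈ P := ⟨hrπ, Set.mem_biUnion hγG hεG⟩
      obtain ⟨τ, hτπ, hrτ, heq2⟩ := shift_decomp hrπ hpε
      have : ρ1 = τ := C.left_cancel hr1 hrτ heq2
      have hempty := hz'P π hπP
      rw [Set.eq_empty_iff_forall_notMem] at hempty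
      exact hempty ρ1 ⟨hρ1z, this ▸ hτπ⟩
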